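/- arXiv:2210.07086 — 2 statements merged into one kernel-verified Lean document; each statement's English description precedes it below -/
import Mathlib

section
/- Under the stated hypotheses, fix x > 0 with I + R_x invertible and set F = (I + R_x)⁻¹. Then for all bounded linear operators P, Q : H → H, the bracket is multiplicative with respect to the star product: C(exp(−xA)·F·P·(A·F + F·A − 2·F·A·F)·Q·F·exp(−xA)·b) = C(exp(−xA)·F·P·F·exp(−xA)·b) · C(exp(−xA)·F·Q·F·exp(−xA)·b). -/
open MeasureTheory Set Filter Topology
set_option synthInstance.maxHeartbeats 1000000
set_option maxHeartbeats 1000000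

section Aux


/-- The semigroup `exp(-tA)` generated by a bounded operator `A`. -/
noncomputable def expA {H : Type*} [NormedAddCommGroup H] [InnerProductSpace ℂ H]
    [CompleteSpace H] (A : H →L[ℂ] H) (t : ℝ) : H →L[ℂ] H :=
  NormedSpace.exp ((-(t : ℂ)) • A)

/-- `R_x = ∫_x^∞ exp(-tA)·BC·exp(-tA) dt` as a Bochner integral. -/
noncomputable def Rop {H : Type*} [NormedAddCommGroup H] [InnerProductSpace ℂ H]
    [CompleteSpace H] (A : H →L[ℂ] H) (BC : H →L[ℂ] H) (x : ℝ) : H →L[ℂ] H :=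
  ∫ t in Set.Ioi x, expA A t * BC * expA A t

variable {H : Type*} [NormedAddCommGroup H] [InnerProductSpace ℂ H] [CompleteSpace H]

lemma expA_eq_real (A : H →L[ℂ] H) (t : ℝ) :
    expA A t = NormedSpace.exp (t • (-A)) := by
  rw [expA]
  congr 1
  rw [smul_neg, ← neg_smul]
  norm_cast

lemma commA (A : H →L[ℂ] H) (t : ℝ) : Commute A (expA A t) := by
  rw [expA_eq_real]
  exact (((Commute.refl A).neg_right).smul_right t).exp_right

lemma hasDerivAt_expA (A : H →L[ℂ] H) (t : ℝ) :
    HasDerivAt (expA A) (-(A * expA A t)) t := by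
  have h := hasDerivAt_exp_smul_const (𝕂 := ℝ) (-A) t
  have h2 : HasDerivAt (expA A) (NormedSpace.exp (t • (-A)) * (-A)) t := by
    simpa only [← expA_eq_real] using h
  simpa only [← expA_eq_real, mul_neg, (commA A t).eq] using h2

lemma hasDerivAt_g (A BC : H →L[ℂ] H) (t : ℝ) :
    HasDerivAt (fun s => expA A s * BC * expA A s)
      (-(A * (expA A t * BC * expA A t) + (expA A t * BC * expA A t) * A)) t := by
  have h : HasDerivAt (fun s => expA A s * BC * expA A s)
      (-(A * expA A t) * BC * expA A t + expA A t * BC * -(A * expA A t)) t :=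
    ((hasDerivAt_expA A t).mul_const BC).mul (hasDerivAt_expA A t)
  convert h using 1
  have hc := (commA A t).eq
  simp only [mul_neg, neg_mul, ← neg_add]
  congr 1
  rw [mul_assoc (expA A t * BC), ← hc]; simp only [mul_assoc]

lemma norm_g_le (A BC : H →L[ℂ] H) {M ε : ℝ} (hM : 0 < M)
    (hdecay : ∀ t : ℝ, 0 ≤ t → ‖expA A t‖ ≤ M * Real.exp (-ε * t))
    {t : ℝ} (ht : 0 ≤ t) :
    ‖expA A t * BC * expA A t‖ ≤ M * M * ‖BC‖ * Real.exp (-(2 * ε) * t) := by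
  have h1 := hdecay t ht
  have h0 : (0:ℝ) ≤ M * Real.exp (-ε * t) := by positivity
  calc ‖expA A t * BC * expA A t‖ ≤ ‖expA A t‖ * ‖BC‖ * ‖expA A t‖ :=
        (norm_mul_le _ _).trans (by gcongr; exact norm_mul_le _ _)
    _ ≤ (M * Real.exp (-ε * t)) * ‖BC‖ * (M * Real.exp (-ε * t)) := by
        gcongr <;> exact norm_nonneg _
    _ = M * M * ‖BC‖ * (Real.exp (-ε * t) * Real.exp (-ε * t)) := by ring
    _ = M * M * ‖BC‖ * Real.exp (-(2 * ε) * t) := by rw [← Real.exp_add]; ring_nf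

lemma key_int (A BC : H →L[ℂ] H) {M ε : ℝ} (hM : 0 < M) (hε : 0 < ε)
    (hdecay : ∀ t : ℝ, 0 ≤ t → ‖expA A t‖ ≤ M * Real.exp (-ε * t))
    {x : ℝ} (hx : 0 < x) :
    A * Rop A BC x + Rop A BC x * A = expA A x * BC * expA A x := by
  set g : ℝ → (H →L[ℂ] H) := fun t => expA A t * BC * expA A t with hg
  have hcont : Continuous g := by
    have : ∀ t, HasDerivAt g (-(A * g t + g t * A)) t := fun t => hasDerivAt_g A BC t
    exact continuous_iff_continuousAt.2 fun t => (this t).continuousAt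
  have hexp : IntegrableOn (fun t => M * M * ‖BC‖ * Real.exp (-(2*ε) * t)) (Ioi x) :=
    (exp_neg_integrableOn_Ioi x (by positivity)).const_mul _
  have hbound : ∀ t ∈ Ioi x, ‖g t‖ ≤ M * M * ‖BC‖ * Real.exp (-(2*ε) * t) :=
    fun t ht => norm_g_le A BC hM hdecay (hx.le.trans (le_of_lt ht))
  have hg_int : IntegrableOn g (Ioi x) := by
    refine Integrable.mono' hexp hcont.aestronglyMeasurable.restrict ?_
    filter_upwards [ae_restrict_mem measurableSet_Ioi] with t ht using hbound t ht
  have hAg : IntegrableOn (fun t => A * g t) (Ioi x) := by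
    have := (ContinuousLinearMap.mul ℂ (H →L[ℂ] H) A).integrable_comp hg_int
    simpa [ContinuousLinearMap.mul_apply', IntegrableOn] using this
  have hgA : IntegrableOn (fun t => g t * A) (Ioi x) := by
    have := ((ContinuousLinearMap.mul ℂ (H →L[ℂ] H)).flip A).integrable_comp hg_int
    simpa [ContinuousLinearMap.mul_apply', IntegrableOn] using this
  have htend : Tendsto g atTop (𝓝 0) := by
    refine squeeze_zero_norm' (a := fun t => M * M * ‖BC‖ * Real.exp (-(2*ε) * t)) ?_ ?_
    · filter_upwards [eventually_ge_atTop x] with t ht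
      exact norm_g_le A BC hM hdecay (hx.le.trans ht)
    · have h1 : Tendsto (fun t : ℝ => (2*ε) * t) atTop atTop :=
        Tendsto.const_mul_atTop (by positivity) tendsto_id
      have h2 := Real.tendsto_exp_neg_atTop_nhds_zero.comp h1
      have h3 := h2.const_mul (M * M * ‖BC‖)
      simpa [Function.comp, neg_mul, mul_comm] using h3
  have hFTC := integral_Ioi_of_hasDerivAt_of_tendsto'
    (f' := fun t => -(A * g t + g t * A))
    (fun t _ => hasDerivAt_g A BC t) ((hAg.add hgA).neg) htend
  rw [integral_neg, integral_add hAg hgA, zero_sub, neg_inj] at hFTC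
  have e1 : ∫ t in Ioi x, A * g t = A * Rop A BC x := by
    have := (ContinuousLinearMap.mul ℂ (H →L[ℂ] H) A).integral_comp_comm hg_int
    simpa [ContinuousLinearMap.mul_apply', Rop] using this
  have e2 : ∫ t in Ioi x, g t * A = Rop A BC x * A := by
    have := ((ContinuousLinearMap.mul ℂ (H →L[ℂ] H)).flip A).integral_comp_comm hg_int
    simpa [ContinuousLinearMap.mul_apply', Rop] using this
  rw [e1, e2] at hFTC
  exact hFTC

end Aux

/-- With the rank-one operator `BC : v ↦ C(v)·b`, `R_x` as above, `F = (I + R_x)⁻¹`, the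
bracket `⌊P⌋ = C(exp(−xA)·F·P·F·exp(−xA)·b)` is multiplicative with respect to the star
product `P∗Q = P·(A·F + F·A − 2·F·A·F)·Q`, i.e. `⌊P∗Q⌋ = ⌊P⌋·⌊Q⌋`. -/
theorem bracket_star_product_multiplicative
    {H : Type*} [NormedAddCommGroup H] [InnerProductSpace ℂ H] [CompleteSpace H]
    (A : H →L[ℂ] H) (b : H) (C : H →L[ℂ] ℂ)
    (M ε : ℝ) (hM : 0 < M) (hε : 0 < ε)
    (hdecay : ∀ t : ℝ, 0 ≤ t → ‖expA A t‖ ≤ M * Real.exp (-ε * t))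
    (x : ℝ) (hx : 0 < x)
    (hinv : IsUnit (1 + Rop A (C.smulRight b) x))
    (F : H →L[ℂ] H) (hF : F = Ring.inverse (1 + Rop A (C.smulRight b) x)) :
    ∀ P Q : H →L[ℂ] H,
      C ((expA A x * F * P * (A * F + F * A - (2 : ℂ) • (F * A * F)) * Q * F * expA A x) b)
        = C ((expA A x * F * P * F * expA A x) b)
            * C ((expA A x * F * Q * F * expA A x) b) := by
  intro P Q
  set E := expA A x with hE
  set BC := C.smulRight b with hBC
  set R := Rop A BC x with hR
  have hFl : F * (1 + R) = 1 := by rw [hF]; exact Ring.inverse_mul_cancel _ hinv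
  have hFr : (1 + R) * F = 1 := by rw [hF]; exact Ring.mul_inverse_cancel _ hinv
  have hkey : A * R + R * A = E * BC * E := key_int A BC hM hε hdecay hx
  have hstar : A * F + F * A - (2:ℂ) • (F * A * F) = F * (E * BC * E) * F := by
    rw [← hkey]
    have e : F * (A * R + R * A) * F
        = F * A * ((1+R) * F) + (F * (1+R)) * (A * F) - (F*A*F + F*A*F) := by
      noncomm_ring
    rw [e, hFr, hFl, mul_one, one_mul, two_smul]
    abel
  have hop : E * F * P * (A * F + F * A - (2:ℂ) • (F * A * F)) * Q * F * E
      = (E * F * P * F * E) * BC * (E * F * Q * F * E) := by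
    rw [hstar]; simp only [mul_assoc]
  rw [hop]
  simp only [ContinuousLinearMap.mul_apply, hBC, ContinuousLinearMap.smulRight_apply,
    _root_.map_smul, smul_eq_mul]
  ring
end

section
/- Under the stated hypotheses, suppose I + R_x is invertible for all x in an open interval J, set F_x = (I + R_x)⁻¹, and let P : J → L(H) be a differentiable operator-valued function. Then the scalar function β(x) = C(exp(−xA)·F_x·P(x)·F_x·exp(−xA)·b) is differentiable on J, with β′(x) = C(exp(−xA)·F_x·(A·(I − 2F_x)·P(x) + P′(x) + P(x)·(I − 2F_x)·A)·F_x·exp(−xA)·b); that is, the bracket intertwines d/dx with the derivation ∂P = A(I−2F_x)P + dP/dx + P(I−2F_x)A. -/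
set_option synthInstance.maxHeartbeats 400000
open MeasureTheory

section aux
variable {H : Type*} [NormedAddCommGroup H] [InnerProductSpace ℂ H] [CompleteSpace H]
variable (A BC : H →L[ℂ] H)

lemma expA_comm (t : ℝ) : A * expA A t = expA A t * A :=
  (((Commute.refl A).smul_right (-(t:ℂ))).exp_right).eq

lemma expA_hasDerivAt (t : ℝ) : HasDerivAt (expA A) (-(A * expA A t)) t := by
  have h := hasDerivAt_exp_smul_const (𝕂 := ℂ) (-A) (t : ℂ)
  have h2 : HasDerivAt (fun y : ℝ => NormedSpace.exp ((y:ℂ) • (-A)))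
      ((1:ℂ) • (NormedSpace.exp ((t:ℂ) • (-A)) * (-A))) t :=
    HasDerivAt.scomp (h := fun y : ℝ => (y : ℂ)) t h (Complex.ofRealCLM.hasDerivAt)
  have heq : ∀ s : ℝ, NormedSpace.exp ((s:ℂ) • (-A)) = expA A s := by
    intro s; rw [expA]; congr 1; rw [smul_neg, ← neg_smul]
  simp only [heq, one_smul] at h2
  convert h2 using 1
  rw [mul_neg, ← expA_comm]

lemma expA_continuous : Continuous (expA A) :=
  continuous_iff_continuousAt.2 fun t => (expA_hasDerivAt A t).continuousAt

lemma fA_hasDerivAt (t : ℝ) :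
    HasDerivAt (fun s => expA A s * BC * expA A s)
      (-(A * (expA A t * BC * expA A t) + (expA A t * BC * expA A t) * A)) t := by
  have h := ((expA_hasDerivAt A t).mul (hasDerivAt_const t BC)).mul (expA_hasDerivAt A t)
  refine h.congr_deriv ?_
  symm
  rw [mul_zero, add_zero]
  have hc := expA_comm A t
  calc -(A * (expA A t * BC * expA A t) + expA A t * BC * expA A t * A)
      = -(A * expA A t) * BC * expA A t + expA A t * BC * -(expA A t * A) := by noncomm_ring
    _ = -(A * expA A t) * BC * expA A t + expA A t * BC * -(A * expA A t) := by rw [hc]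

variable {M ε : ℝ}

lemma fA_bound (hdecay : ∀ t : ℝ, 0 ≤ t → ‖expA A t‖ ≤ M * Real.exp (-ε * t))
    (t : ℝ) (ht : 0 ≤ t) :
    ‖expA A t * BC * expA A t‖ ≤ M * M * ‖BC‖ * Real.exp (-(2*ε) * t) := by
  have h1 := hdecay t ht
  have h0 : (0:ℝ) ≤ M * Real.exp (-ε * t) := le_trans (norm_nonneg _) h1
  calc ‖expA A t * BC * expA A t‖ ≤ ‖expA A t * BC‖ * ‖expA A t‖ := norm_mul_le _ _
    _ ≤ ‖expA A t‖ * ‖BC‖ * ‖expA A t‖ :=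
        mul_le_mul_of_nonneg_right (norm_mul_le _ _) (norm_nonneg _)
    _ ≤ (M * Real.exp (-ε * t)) * ‖BC‖ * (M * Real.exp (-ε * t)) := by
        apply mul_le_mul (mul_le_mul_of_nonneg_right h1 (norm_nonneg _)) h1 (norm_nonneg _)
        positivity
    _ = M * M * ‖BC‖ * Real.exp (-(2*ε) * t) := by
        rw [show -(2*ε)*t = (-ε*t) + (-ε*t) by ring, Real.exp_add]; ring

lemma fA_integrableOn (hε : 0 < ε)
    (hdecay : ∀ t : ℝ, 0 ≤ t → ‖expA A t‖ ≤ M * Real.exp (-ε * t))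
    (c : ℝ) (hc : 0 ≤ c) :
    IntegrableOn (fun t => expA A t * BC * expA A t) (Set.Ioi c) := by
  apply Integrable.mono' ((exp_neg_integrableOn_Ioi c (by positivity : (0:ℝ) < 2*ε)).const_mul
    (M * M * ‖BC‖))
  · exact ((Continuous.mul ((expA_continuous A).mul continuous_const)
      (expA_continuous A)).aestronglyMeasurable).restrict
  · filter_upwards [ae_restrict_mem measurableSet_Ioi] with t ht
    have := fA_bound A BC hdecay t (le_trans hc (le_of_lt ht))
    simpa [mul_assoc] using this

lemma fA_tendsto (hε : 0 < ε)
    (hdecay : ∀ t : ℝ, 0 ≤ t → ‖expA A t‖ ≤ M * Real.exp (-ε * t)) :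
    Filter.Tendsto (fun t => expA A t * BC * expA A t) Filter.atTop (nhds 0) := by
  apply squeeze_zero_norm' (a := fun t => M * M * ‖BC‖ * Real.exp (-(2*ε) * t))
  · filter_upwards [Filter.eventually_ge_atTop (0:ℝ)] with t ht
    exact fA_bound A BC hdecay t ht
  · have : Filter.Tendsto (fun t : ℝ => Real.exp (-(2*ε) * t)) Filter.atTop (nhds 0) := by
      apply Real.tendsto_exp_atBot.comp
      exact Filter.Tendsto.const_mul_atTop_of_neg (by linarith) Filter.tendsto_id
    simpa using this.const_mul (M * M * ‖BC‖)


lemma lyap (hε : 0 < ε)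
    (hdecay : ∀ t : ℝ, 0 ≤ t → ‖expA A t‖ ≤ M * Real.exp (-ε * t))
    (x : ℝ) (hx : 0 < x) :
    A * Rop A BC x + Rop A BC x * A = expA A x * BC * expA A x := by
  set f : ℝ → H →L[ℂ] H := fun t => expA A t * BC * expA A t with hf
  have hint : IntegrableOn f (Set.Ioi x) := fA_integrableOn A BC hε hdecay x hx.le
  have hL : A * Rop A BC x = ∫ t in Set.Ioi x, A * f t := by
    have := (ContinuousLinearMap.mul ℂ (H →L[ℂ] H) A).integral_comp_comm hint
    simpa [Rop, ContinuousLinearMap.mul_apply'] using this.symm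
  have hRr : Rop A BC x * A = ∫ t in Set.Ioi x, f t * A := by
    have := ((ContinuousLinearMap.mul ℂ (H →L[ℂ] H)).flip A).integral_comp_comm hint
    simpa [Rop] using this.symm
  have hintL : IntegrableOn (fun t => A * f t) (Set.Ioi x) :=
    (ContinuousLinearMap.mul ℂ (H →L[ℂ] H) A).integrable_comp hint
  have hintR : IntegrableOn (fun t => f t * A) (Set.Ioi x) :=
    ((ContinuousLinearMap.mul ℂ (H →L[ℂ] H)).flip A).integrable_comp hint
  rw [hL, hRr, ← integral_add hintL hintR]
  have := integral_Ioi_of_hasDerivAt_of_tendsto' (f := fun t => -(f t))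
    (f' := fun t => A * f t + f t * A) (a := x) (m := 0)
    (fun t _ => by simpa [Pi.neg_def] using (fA_hasDerivAt A BC t).neg)
    (hintL.add hintR) (by simpa using (fA_tendsto A BC hε hdecay).neg)
  rw [this]; simp [hf]

lemma Rop_hasDerivAt (hε : 0 < ε)
    (hdecay : ∀ t : ℝ, 0 ≤ t → ‖expA A t‖ ≤ M * Real.exp (-ε * t))
    (x : ℝ) (hx : 0 < x) :
    HasDerivAt (Rop A BC) (-(expA A x * BC * expA A x)) x := by
  set f : ℝ → H →L[ℂ] H := fun t => expA A t * BC * expA A t with hf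
  have hcont : Continuous f :=
    ((expA_continuous A).mul continuous_const).mul (expA_continuous A)
  have key : ∀ y ∈ Set.Ioi (0:ℝ), Rop A BC y = Rop A BC 0 - ∫ t in (0:ℝ)..y, f t := by
    intro y hy
    have hy0 : (0:ℝ) ≤ y := (Set.mem_Ioi.1 hy).le
    rw [intervalIntegral.integral_of_le hy0]
    have hsplit : Rop A BC 0 = (∫ t in Set.Ioc 0 y, f t) + Rop A BC y := by
      rw [Rop, Rop, ← setIntegral_union (Set.Ioc_disjoint_Ioi le_rfl) measurableSet_Ioi
        ((fA_integrableOn A BC hε hdecay 0 le_rfl).mono_set Set.Ioc_subset_Ioi_self)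
        (fA_integrableOn A BC hε hdecay y hy0), Set.Ioc_union_Ioi_eq_Ioi hy0]
    rw [hsplit]; abel
  have hderiv : HasDerivAt (fun y => ∫ t in (0:ℝ)..y, f t) (f x) x :=
    intervalIntegral.integral_hasDerivAt_right (hcont.intervalIntegrable 0 x)
      (hcont.aestronglyMeasurable.stronglyMeasurableAtFilter) hcont.continuousAt
  have h2 := (hasDerivAt_const x (Rop A BC 0)).sub hderiv
  rw [zero_sub] at h2
  exact h2.congr_of_eventuallyEq
    (Filter.eventuallyEq_of_mem (Ioi_mem_nhds hx) key)

end aux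


lemma algebra_key {S : Type*} [Ring S]
    (A e Fx R P Q BC : S)
    (hcomm : A * e = e * A)
    (hlyap : A * R + R * A = e * BC * e)
    (hRF : R * Fx = 1 - Fx) (hFR : Fx * R = 1 - Fx) :
    ((((-(A * e)) * Fx + e * (Fx * (e * BC * e) * Fx)) * P + e * Fx * Q) * Fx
        + (e * Fx * P) * (Fx * (e * BC * e) * Fx)) * e
      + (e * Fx * P * Fx) * (-(A * e))
    = e * Fx * (A * (1 - (Fx + Fx)) * P + Q + P * (1 - (Fx + Fx)) * A) * Fx * e := by
  have hf : Fx * (e * BC * e) * Fx = Fx*A + A*Fx - Fx*A*Fx - Fx*A*Fx := by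
    rw [← hlyap]
    have h1 : Fx * (A*R + R*A) * Fx = Fx * A * (R * Fx) + Fx * R * (A * Fx) := by noncomm_ring
    rw [h1, hRF, hFR]; noncomm_ring
  have hi : -(A*e)*Fx + e*(Fx * (e*BC*e) * Fx) = e*(Fx*(A*(1 - (Fx+Fx)))) := by
    rw [hf, hcomm]; noncomm_ring
  have hii : (Fx * (e*BC*e) * Fx)*e - Fx*(A*e) = ((1 - (Fx+Fx))*A)*(Fx*e) := by
    rw [hf]; noncomm_ring
  calc ((((-(A * e)) * Fx + e * (Fx * (e * BC * e) * Fx)) * P + e * Fx * Q) * Fx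
        + (e * Fx * P) * (Fx * (e * BC * e) * Fx)) * e
      + (e * Fx * P * Fx) * (-(A * e))
      = (-(A*e)*Fx + e*(Fx * (e*BC*e) * Fx)) * (P*(Fx*e)) + e*Fx*Q*Fx*e
        + (e*Fx*P) * ((Fx * (e*BC*e) * Fx)*e - Fx*(A*e)) := by noncomm_ring
    _ = (e*(Fx*(A*(1-(Fx+Fx))))) * (P*(Fx*e)) + e*Fx*Q*Fx*e
        + (e*Fx*P)*(((1-(Fx+Fx))*A)*(Fx*e)) := by rw [hi, hii]
    _ = e * Fx * (A * (1 - (Fx + Fx)) * P + Q + P * (1 - (Fx + Fx)) * A) * Fx * e := by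
        noncomm_ring

/-- With the rank-one operator `BC : v ↦ C(v)·b`, `R_x` as above, `F_x = (I + R_x)⁻¹` on an
open interval `J`, and a differentiable operator-valued function `P`, the scalar function
`β(x) = C(exp(−xA)·F_x·P(x)·F_x·exp(−xA)·b)` is differentiable on `J`, with
`β′(x) = C(exp(−xA)·F_x·(A·(I − 2F_x)·P(x) + P′(x) + P(x)·(I − 2F_x)·A)·F_x·exp(−xA)·b)`:
the bracket intertwines `d/dx` with the derivation `∂P = A(I−2F)P + P' + P(I−2F)A`. -/
theorem bracket_intertwines_derivation
    {H : Type*} [NormedAddCommGroup H] [InnerProductSpace ℂ H] [CompleteSpace H]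
    (A : H →L[ℂ] H) (b : H) (C : H →L[ℂ] ℂ)
    (M ε : ℝ) (hM : 0 < M) (hε : 0 < ε)
    (hdecay : ∀ t : ℝ, 0 ≤ t → ‖expA A t‖ ≤ M * Real.exp (-ε * t))
    (J : Set ℝ) (hJopen : IsOpen J) (hJsub : J ⊆ Set.Ioi (0 : ℝ))
    (hinv : ∀ x ∈ J, IsUnit (1 + Rop A (C.smulRight b) x))
    (F : ℝ → H →L[ℂ] H)
    (hF : ∀ x ∈ J, F x = Ring.inverse (1 + Rop A (C.smulRight b) x))
    (P P' : ℝ → H →L[ℂ] H)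
    (hP : ∀ x ∈ J, HasDerivAt P (P' x) x) :
    ∀ x ∈ J,
      HasDerivAt (fun y : ℝ => C ((expA A y * F y * P y * F y * expA A y) b))
        (C ((expA A x * F x *
              (A * (1 - (2 : ℂ) • F x) * P x + P' x + P x * (1 - (2 : ℂ) • F x) * A) *
              F x * expA A x) b)) x := by
  intro x hx
  set BCop : H →L[ℂ] H := C.smulRight b with hBCop
  have hx0 : (0:ℝ) < x := hJsub hx
  have hu : IsUnit (1 + Rop A BCop x) := hinv x hx
  have hFval : F x = Ring.inverse (1 + Rop A BCop x) := hF x hx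
  -- derivative of expA
  have he := expA_hasDerivAt A x
  -- derivative of Rop
  have hR := Rop_hasDerivAt A BCop hε hdecay x hx0
  -- derivative of F
  have hG : HasDerivAt (fun y => 1 + Rop A BCop y) (-(expA A x * BCop * expA A x)) x := by
    exact ((hasDerivAt_const x (1 : H →L[ℂ] H)).add hR).congr_deriv (zero_add _)
  have hinvF : HasFDerivAt (Ring.inverse (M₀ := H →L[ℂ] H))
      (-ContinuousLinearMap.mulLeftRight ℂ (H →L[ℂ] H) ↑hu.unit⁻¹ ↑hu.unit⁻¹)
      (1 + Rop A BCop x) := by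
    have h := hasFDerivAt_ringInverse (𝕜 := ℂ) hu.unit
    rwa [hu.unit_spec] at h
  have hFinv : ((hu.unit⁻¹ : (H →L[ℂ] H)ˣ) : H →L[ℂ] H) = F x := by
    rw [hFval]
    exact (Ring.inverse_unit hu.unit).symm.trans (congrArg Ring.inverse hu.unit_spec)
  have hFd : HasDerivAt F (F x * (expA A x * BCop * expA A x) * F x) x := by
    have h6 := (hinvF.restrictScalars ℝ).comp_hasDerivAt x hG
    have h7 : HasDerivAt (fun y => Ring.inverse (1 + Rop A BCop y))
        (F x * (expA A x * BCop * expA A x) * F x) x := by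
      refine h6.congr_deriv ?_
      symm
      rw [ContinuousLinearMap.coe_restrictScalars']
      rw [ContinuousLinearMap.neg_apply, ContinuousLinearMap.mulLeftRight_apply, hFinv]
      rw [mul_neg, neg_mul, neg_neg]
    exact h7.congr_of_eventuallyEq
      (Filter.eventuallyEq_of_mem (hJopen.mem_nhds hx) hF)
  have hP' := hP x hx
  -- product rule
  have hprod := (((he.mul hFd).mul hP').mul hFd).mul he
  -- apply the continuous linear functional T ↦ C (T b)
  have hβ := (((C.comp (ContinuousLinearMap.apply ℂ H b)).restrictScalars ℝ).hasFDerivAt).comp_hasDerivAt x hprod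
  -- relations for F
  have hmul : (1 + Rop A BCop x) * F x = 1 := by
    rw [hFval]; exact Ring.mul_inverse_cancel _ hu
  have hmul' : F x * (1 + Rop A BCop x) = 1 := by
    rw [hFval]; exact Ring.inverse_mul_cancel _ hu
  have hRF : Rop A BCop x * F x = 1 - F x := by
    rw [add_mul, one_mul] at hmul; exact eq_sub_of_add_eq' hmul
  have hFR : F x * Rop A BCop x = 1 - F x := by
    rw [mul_add, mul_one] at hmul'; exact eq_sub_of_add_eq' hmul'
  have hkey := algebra_key A (expA A x) (F x) (Rop A BCop x) (P x) (P' x) BCop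
    (expA_comm A x) (lyap A BCop hε hdecay x hx0) hRF hFR
  have htwo : (1 : H →L[ℂ] H) - (2:ℂ) • F x = 1 - (F x + F x) := by
    rw [two_smul]
  rw [htwo, ← hkey]
  exact hβ
end
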